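/- Suppose g and ḡ are two differentiable curves on a matrix Lie group G both satisfying ẋ = ξ(t)x + X̃_t(x) + xζ(t), where X̃_t satisfies the cocycle property X̃_t(hg) = h X̃_t(g) + X̃_t(h) g. Then the right-invariant error h = ḡg⁻¹ satisfies the autonomous equation ḣ = X̃_t(h) + ξ(t)h − hξ(t), which does not involve ζ, g, or ḡ. -/

import Mathlib

open Matrix

attribute [local instance] Matrix.linftyOpNormedRing Matrix.linftyOpNormedAlgebra

/-- If `g` and `ḡ` both satisfy `ẋ = ξ(t) x + X̃_t(x) + x ζ(t)` with `X̃` satisfying the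
cocycle property, then the right-invariant error `h = ḡ g⁻¹` satisfies the autonomous
equation `ḣ = X̃_t(h) + ξ(t) h − h ξ(t)`. -/
theorem right_error_autonomous (n : ℕ) (G : Set (Matrix (Fin n) (Fin n) ℝ))
    (hone : (1 : Matrix (Fin n) (Fin n) ℝ) ∈ G)
    (hmul : ∀ a ∈ G, ∀ b ∈ G, a * b ∈ G)
    (hinv : ∀ a ∈ G, a⁻¹ ∈ G)
    (Xt : ℝ → Matrix (Fin n) (Fin n) ℝ → Matrix (Fin n) (Fin n) ℝ)
    (ξ ζ : ℝ → Matrix (Fin n) (Fin n) ℝ)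
    (hcoc : ∀ t, ∀ g ∈ G, ∀ h ∈ G, Xt t (h * g) = h * Xt t g + Xt t h * g)
    (g gbar : ℝ → Matrix (Fin n) (Fin n) ℝ)
    (hgG : ∀ t, g t ∈ G) (hgbarG : ∀ t, gbar t ∈ G)
    (hunit : ∀ t, IsUnit (g t))
    (hdg : ∀ t, HasDerivAt g (ξ t * g t + Xt t (g t) + g t * ζ t) t)
    (hdgbar : ∀ t, HasDerivAt gbar (ξ t * gbar t + Xt t (gbar t) + gbar t * ζ t) t) :
    ∀ t, HasDerivAt (fun s => gbar s * (g s)⁻¹)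
      (Xt t (gbar t * (g t)⁻¹) + ξ t * (gbar t * (g t)⁻¹)
        - (gbar t * (g t)⁻¹) * ξ t) t := by
  intro t
  have hdet : IsUnit (g t).det := (Matrix.isUnit_iff_isUnit_det (g t)).1 (hunit t)
  have h1 : g t * (g t)⁻¹ = 1 := Matrix.mul_nonsing_inv _ hdet
  have h2 : (g t)⁻¹ * g t = 1 := Matrix.nonsing_inv_mul _ hdet
  have h1' : ∀ x, g t * ((g t)⁻¹ * x) = x := fun x => by rw [← mul_assoc, h1, one_mul]
  have h2' : ∀ x, (g t)⁻¹ * (g t * x) = x := fun x => by rw [← mul_assoc, h2, one_mul]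
  -- X̃ vanishes at the identity
  have hX1 : Xt t 1 = 0 := by
    have := hcoc t 1 hone 1 hone
    simp only [one_mul, mul_one] at this
    have h0 : Xt t 1 + 0 = Xt t 1 + Xt t 1 := by simpa using this
    exact (add_left_cancel h0).symm
  -- X̃ on the inverse
  have hXinv : Xt t (g t)⁻¹ = -((g t)⁻¹ * Xt t (g t) * (g t)⁻¹) := by
    have hc := hcoc t (g t) (hgG t) ((g t)⁻¹) (hinv _ (hgG t))
    rw [h2, hX1] at hc
    have := congrArg (· * (g t)⁻¹) hc
    simp only [add_mul, zero_mul, mul_assoc, h1, mul_one] at this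
    have h0 : 0 = (g t)⁻¹ * (Xt t (g t) * (g t)⁻¹) + Xt t (g t)⁻¹ := this
    rw [eq_comm, ← neg_eq_iff_add_eq_zero] at h0
    rw [← h0, mul_assoc]
  -- derivative of the inverse curve
  have hdinv : HasDerivAt (fun s => (g s)⁻¹)
      (-((g t)⁻¹ * (ξ t * g t + Xt t (g t) + g t * ζ t) * (g t)⁻¹)) t := by
    obtain ⟨u, hu⟩ := hunit t
    have hF : HasFDerivAt Ring.inverse
        (-ContinuousLinearMap.mulLeftRight ℝ _ ((g t)⁻¹) ((g t)⁻¹)) (g t) := by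
      have := hasFDerivAt_ringInverse (𝕜 := ℝ) u
      rw [hu] at this
      convert this using 2
      rfl
      rfl
      rw [← hu, ← Ring.inverse_unit u, Matrix.nonsing_inv_eq_ringInverse]
    have hc := hF.comp_hasDerivAt t (hdg t)
    have heq : (fun s => (g s)⁻¹) = fun s => Ring.inverse (g s) := by
      funext s; rw [Matrix.nonsing_inv_eq_ringInverse]
    rw [heq]
    convert hc using 1
    all_goals rfl
  have hprod := (hdgbar t).mul hdinv
  convert hprod using 1
  rfl
  rfl
  rfl
  rfl
  rw [hcoc t ((g t)⁻¹) (hinv _ (hgG t)) (gbar t) (hgbarG t), hXinv]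
  simp only [mul_add, add_mul, mul_neg, neg_mul, mul_assoc, h1, h2, h1', h2', mul_one, one_mul]
  abel
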